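/- (Theorem 1(ii)) Let ℓ ≥ 3 and suppose every simple cycle of G has length at most ℓ. Then for every integer g ≥ ℓ − 1, every complex eigenvalue of B^(g) is 0; equivalently, B^(g) is nilpotent and ρ(B^(g)) = 0. -/

import Mathlib

open Matrix ENNReal

namespace PercNB

variable {V : Type*} [Fintype V] [DecidableEq V]

/-- `p : Fin (g+1) → V` is a length-`g` directed path in the simple graph `G`:
`g+1` pairwise distinct vertices with consecutive vertices adjacent. -/
def IsDiPath (G : SimpleGraph V) (g : ℕ) (p : Fin (g+1) → V) : Prop :=
  Function.Injective p ∧ ∀ k : Fin g, G.Adj (p k.castSucc) (p k.succ)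

instance (G : SimpleGraph V) [DecidableRel G.Adj] (g : ℕ) :
    DecidablePred (IsDiPath G g) := fun p =>
  inferInstanceAs (Decidable (Function.Injective p ∧ ∀ k : Fin g, G.Adj (p k.castSucc) (p k.succ)))

/-- The type of length-`g` directed paths of `G`. -/
abbrev DiPath (G : SimpleGraph V) (g : ℕ) := {p : Fin (g+1) → V // IsDiPath G g p}

/-- The `g`-th-order non-backtracking matrix `B^(g)` of `G`, indexed by the length-`g`
directed paths of `G`: the `(p, q)` entry is `1` if `q k = p (k+1)` for `1 ≤ k ≤ g` and
`(p 1, …, p (g+1), q (g+1))` is a length-`(g+1)` directed path, and `0` otherwise. -/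
def NBM (G : SimpleGraph V) [DecidableRel G.Adj] (g : ℕ) :
    Matrix (DiPath G g) (DiPath G g) ℂ := fun p q =>
  if (∀ k : Fin g, q.1 k.castSucc = p.1 k.succ) ∧
      IsDiPath G (g+1) (Fin.snoc p.1 (q.1 (Fin.last g))) then 1 else 0

/-- The spectral radius of a finite square complex matrix:
the maximum modulus of its eigenvalues (`0` if the index type is empty). -/
noncomputable def specRad {n : Type*} [Fintype n] [DecidableEq n] (X : Matrix n n ℂ) : ℝ≥0∞ :=
  spectralRadius ℂ X

/-- `c : Fin k → V` is a simple cycle of length `k ≥ 3` in `G`: pairwise distinct vertices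
with `c t` adjacent to `c (t+1)` for `1 ≤ t ≤ k-1` and `c k` adjacent to `c 1`. -/
def IsSimpleCycle (G : SimpleGraph V) (k : ℕ) (c : Fin k → V) : Prop :=
  3 ≤ k ∧ Function.Injective c ∧
    ∀ t : Fin k, G.Adj (c t) (c ⟨(t.val + 1) % k, Nat.mod_lt _ t.pos⟩)

/-- The arc relation of the digraph `G^(g)` on the length-`g` directed paths of `G`:
`p → q` exactly when `B^(g)_{p,q} = 1`. -/
def NBArc (G : SimpleGraph V) (g : ℕ) (p q : DiPath G g) : Prop :=
  (∀ k : Fin g, q.1 k.castSucc = p.1 k.succ) ∧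
    IsDiPath G (g+1) (Fin.snoc p.1 (q.1 (Fin.last g)))

/-- The arc relation of the line digraph `L(G^(g-1))` (for `g ≥ 1`), under the identification
of its vertices — the arcs `(i₁,…,i_g) → (i₂,…,i_{g+1})` of `G^(g-1)` — with the length-`g`
directed paths `(i₁,…,i_{g+1})` of `G`: there is an arc `p → q` exactly when the arc
corresponding to `p` ends at the tail of the arc corresponding to `q`, i.e. when
`q k = p (k+1)` for `1 ≤ k ≤ g`. -/
def LineArc (G : SimpleGraph V) (g : ℕ) (p q : DiPath G g) : Prop :=
  ∀ k : Fin g, q.1 k.castSucc = p.1 k.succ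

/-- `c : Fin k → α` is a directed cycle of length `k` with respect to the arc relation `r`:
`k` pairwise distinct vertices with an arc from each to the cyclically next one. -/
def IsDiCycle {α : Type*} (r : α → α → Prop) (k : ℕ) (c : Fin k → α) : Prop :=
  Function.Injective c ∧ ∀ t : Fin k, r (c t) (c ⟨(t.val + 1) % k, Nat.mod_lt _ t.pos⟩)

/-- The type of directed edges of `G`: ordered pairs of adjacent vertices. -/
abbrev DiEdge (G : SimpleGraph V) := {e : V × V // G.Adj e.1 e.2}

/-- The standard non-backtracking matrix `B = B^(1)`, indexed by directed edges:
`B_{(i,j),(k,l)} = 1` iff `j = k`, `l ≠ i` and `j` is adjacent to `l`. -/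
def Bmat (G : SimpleGraph V) [DecidableRel G.Adj] : Matrix (DiEdge G) (DiEdge G) ℂ :=
  fun e f => if e.1.2 = f.1.1 ∧ f.1.2 ≠ e.1.1 ∧ G.Adj e.1.2 f.1.2 then 1 else 0

/-- `(ΔB₁)_{(i,j),(k,l)} = 1` iff `B_{(i,j),(k,l)} = 1` and `i` is adjacent to `l`. -/
def dB1 (G : SimpleGraph V) [DecidableRel G.Adj] : Matrix (DiEdge G) (DiEdge G) ℂ :=
  fun e f => if (e.1.2 = f.1.1 ∧ f.1.2 ≠ e.1.1 ∧ G.Adj e.1.2 f.1.2) ∧ G.Adj e.1.1 f.1.2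
    then 1 else 0

/-- `(ΔB₂)_{(i,j),(k,l)} = 1` iff `l = i` and `j` is adjacent to `k`. -/
def dB2 (G : SimpleGraph V) [DecidableRel G.Adj] : Matrix (DiEdge G) (DiEdge G) ℂ :=
  fun e f => if f.1.2 = e.1.1 ∧ G.Adj e.1.2 f.1.1 then 1 else 0

/-- The diagonal matrix `D_Δ` whose `((i,j),(i,j))` entry is the number of common
neighbours of `i` and `j`. -/
noncomputable def Ddel (G : SimpleGraph V) [DecidableRel G.Adj] :
    Matrix (DiEdge G) (DiEdge G) ℂ :=
  Matrix.diagonal fun e =>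
    ((Finset.univ.filter fun v => G.Adj e.1.1 v ∧ G.Adj e.1.2 v).card : ℂ)

/-- The `8E × 8E` block matrix
`M = [[B, −ΔB₂, D_Δ − I, B − ΔB₁], [I, 0, 0, 0], [0, I, 0, 0], [0, 0, I, 0]]`. -/
noncomputable def Mmat (G : SimpleGraph V) [DecidableRel G.Adj] :
    Matrix ((DiEdge G ⊕ DiEdge G) ⊕ (DiEdge G ⊕ DiEdge G))
      ((DiEdge G ⊕ DiEdge G) ⊕ (DiEdge G ⊕ DiEdge G)) ℂ :=
  Matrix.fromBlocks
    (Matrix.fromBlocks (Bmat G) (-(dB2 G)) 1 0)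
    (Matrix.fromBlocks (Ddel G - 1) (Bmat G - dB1 G) 0 0)
    (Matrix.fromBlocks 0 1 0 0)
    (Matrix.fromBlocks 0 0 1 0)

/-- `x_{(i,j)} = Σ_k ψ_{(i,j,k)}`, the sum over all vertices `k` adjacent to `j` with
`k ≠ i`; equivalently, the sum of `ψ` over all length-2 directed paths starting `(i,j,·)`. -/
noncomputable def xvec (G : SimpleGraph V) [DecidableRel G.Adj] (ψ : DiPath G 2 → ℂ) :
    DiEdge G → ℂ := fun e =>
  ∑ p ∈ Finset.univ.filter (fun p : DiPath G 2 => p.1 0 = e.1.1 ∧ p.1 1 = e.1.2), ψ p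

/-- `y_{(i,j)} = Σ_k ψ_{(i,j,k)}`, the sum over all vertices `k` adjacent to both `i`
and `j`. -/
noncomputable def yvec (G : SimpleGraph V) [DecidableRel G.Adj] (ψ : DiPath G 2 → ℂ) :
    DiEdge G → ℂ := fun e =>
  ∑ p ∈ Finset.univ.filter
    (fun p : DiPath G 2 => p.1 0 = e.1.1 ∧ p.1 1 = e.1.2 ∧ G.Adj e.1.1 (p.1 2)), ψ p

/-- The block vector `z = (x, λ⁻¹x, λ⁻²x, λ⁻³x)`. -/
noncomputable def blockVec {G : SimpleGraph V} (lam : ℂ) (x : DiEdge G → ℂ) :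
    (DiEdge G ⊕ DiEdge G) ⊕ (DiEdge G ⊕ DiEdge G) → ℂ :=
  Sum.elim (Sum.elim x (lam⁻¹ • x)) (Sum.elim ((lam ^ 2)⁻¹ • x) ((lam ^ 3)⁻¹ • x))

/-- The vector `ψ` built from `x`:
`ψ_{(i,j,k)} = (λ²x_{(j,k)} − λx_{(k,i)} + x_{(i,j)})/(λ³+1)` if `i` and `k` are adjacent,
and `ψ_{(i,j,k)} = λ⁻¹ x_{(j,k)}` if `i` and `k` are not adjacent. -/
noncomputable def psiOf (G : SimpleGraph V) [DecidableRel G.Adj] (lam : ℂ)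
    (x : DiEdge G → ℂ) : DiPath G 2 → ℂ := fun p =>
  if h : G.Adj (p.1 0) (p.1 2) then
    (lam ^ 2 * x ⟨(p.1 1, p.1 2), by simpa using p.2.2 1⟩
      - lam * x ⟨(p.1 2, p.1 0), h.symm⟩
      + x ⟨(p.1 0, p.1 1), by simpa using p.2.2 0⟩) / (lam ^ 3 + 1)
  else lam⁻¹ * x ⟨(p.1 1, p.1 2), by simpa using p.2.2 1⟩


section Aux

variable {V : Type*} [Fintype V] [DecidableEq V]

lemma no_periodic_chain (G : SimpleGraph V) (l : ℕ) (hl : 3 ≤ l)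
    (hcyc : ∀ (k : ℕ) (c : Fin k → V), IsSimpleCycle G k c → k ≤ l)
    (g : ℕ) (hg : l - 1 ≤ g)
    (R : ℕ → DiPath G g) (hR : ∀ j, NBArc G g (R j) (R (j+1)))
    (d : ℕ) (hd : 0 < d) (hrep : R d = R 0) : False := by
  classical
  have hg2 : 2 ≤ g := by omega
  let w : ℕ → V := fun j => (R j).1 ⟨0, Nat.succ_pos g⟩
  have coord : ∀ (k : ℕ) (hk : k < g + 1) (j : ℕ), (R j).1 ⟨k, hk⟩ = w (j + k) := by
    intro k
    induction k with
    | zero => intro hk j; rfl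
    | succ k ih =>
      intro hk j
      have hk' : k < g := by omega
      have h1 : (⟨k+1, hk⟩ : Fin (g+1)) = (⟨k, hk'⟩ : Fin g).succ := rfl
      rw [h1, ← (hR j).1 ⟨k, hk'⟩]
      have h2 : (⟨k, hk'⟩ : Fin g).castSucc = (⟨k, by omega⟩ : Fin (g+1)) := rfl
      rw [h2, ih (by omega) (j+1)]
      congr 1
      omega
  have hadjw : ∀ j, G.Adj (w j) (w (j+1)) := by
    intro j
    have h := (R j).2.2 ⟨0, by omega⟩
    have e1 : (R j).1 ((⟨0, by omega⟩ : Fin g).castSucc) = w j := by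
      have : (⟨0, by omega⟩ : Fin g).castSucc = (⟨0, by omega⟩ : Fin (g+1)) := rfl
      rw [this, coord 0 (by omega) j]
      rfl
    have e2 : (R j).1 ((⟨0, by omega⟩ : Fin g).succ) = w (j+1) := by
      have : (⟨0, by omega⟩ : Fin g).succ = (⟨1, by omega⟩ : Fin (g+1)) := rfl
      rw [this, coord 1 (by omega) j]
    rwa [e1, e2] at h
  have hval : ∀ (j k : ℕ) (hk : k < g + 2),
      (Fin.snoc (R j).1 ((R (j+1)).1 (Fin.last g)) : Fin (g+2) → V) ⟨k, hk⟩ = w (j + k) := by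
    intro j k hk
    by_cases hkl : k < g + 1
    · have hcast : (⟨k, hk⟩ : Fin (g+2)) = Fin.castSucc ⟨k, hkl⟩ := rfl
      rw [hcast, Fin.snoc_castSucc, coord k hkl j]
    · have hkeq : k = g + 1 := by omega
      have hlast : (⟨k, hk⟩ : Fin (g+2)) = Fin.last (g+1) := Fin.ext (by simpa using hkeq)
      rw [hlast, Fin.snoc_last]
      have hlg : Fin.last g = (⟨g, by omega⟩ : Fin (g+1)) := rfl
      rw [hlg, coord g (by omega) (j+1)]
      congr 1
      omega
  have hwin : ∀ (j k1 k2 : ℕ), k1 < g + 2 → k2 < g + 2 → k1 ≠ k2 →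
      w (j + k1) ≠ w (j + k2) := by
    intro j k1 k2 h1 h2 hne heq
    apply hne
    have := (hR j).2.1 (a₁ := ⟨k1, h1⟩) (a₂ := ⟨k2, h2⟩)
      (by rw [hval j k1 h1, hval j k2 h2]; exact heq)
    simpa using congrArg Fin.val this
  -- minimal return
  let P : ℕ → Prop := fun e => 0 < e ∧ ∃ a, w a = w (a + e)
  have hPd : ∃ e, P e := by
    refine ⟨d, hd, 0, ?_⟩
    show (R 0).1 _ = (R (0 + d)).1 _
    rw [Nat.zero_add, hrep]
  set d₀ := Nat.find hPd with hd₀def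
  obtain ⟨hd₀pos, a₀, ha₀⟩ := Nat.find_spec hPd
  have hd₀big : g + 2 ≤ d₀ := by
    by_contra hcon
    exact hwin a₀ 0 d₀ (by omega) (by omega) (by omega) ha₀
  have hinj : Function.Injective (fun i : Fin d₀ => w (a₀ + i.val)) := by
    intro i j hij
    simp only at hij
    rcases Nat.lt_trichotomy i.val j.val with h | h | h
    · exfalso
      refine Nat.find_min hPd (m := j.val - i.val) (by omega) ⟨by omega, a₀ + i.val, ?_⟩
      rw [show a₀ + i.val + (j.val - i.val) = a₀ + j.val from by omega]
      exact hij
    · exact Fin.ext h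
    · exfalso
      refine Nat.find_min hPd (m := i.val - j.val) (by omega) ⟨by omega, a₀ + j.val, ?_⟩
      rw [show a₀ + j.val + (i.val - j.val) = a₀ + i.val from by omega]
      exact hij.symm
  have hadjc : ∀ t : Fin d₀,
      G.Adj (w (a₀ + t.val)) (w (a₀ + ((t.val + 1) % d₀))) := by
    intro t
    by_cases h : t.val + 1 < d₀
    · rw [Nat.mod_eq_of_lt h]
      exact hadjw (a₀ + t.val)
    · have h2 : t.val + 1 = d₀ := by have := t.isLt; omega
      have h3 : (t.val + 1) % d₀ = 0 := by rw [h2, Nat.mod_self]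
      rw [h3]
      have hstep := hadjw (a₀ + t.val)
      rw [show a₀ + t.val + 1 = a₀ + d₀ from by omega] at hstep
      rw [show a₀ + 0 = a₀ from rfl, ha₀]
      exact hstep
  have hle := hcyc d₀ (fun i : Fin d₀ => w (a₀ + i.val)) ⟨by omega, hinj, hadjc⟩
  omega

lemma nbArc_of_ne (G : SimpleGraph V) [DecidableRel G.Adj] (g : ℕ)
    {p q : DiPath G g} (h : NBM G g p q ≠ 0) : NBArc G g p q := by
  unfold NBM at h
  exact of_not_not fun hc => h (if_neg hc)

lemma exists_chain (G : SimpleGraph V) [DecidableRel G.Adj] (g : ℕ) :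
    ∀ (n : ℕ) (p q : DiPath G g), (NBM G g ^ n) p q ≠ 0 →
      ∃ r : ℕ → DiPath G g, r 0 = p ∧ r n = q ∧ ∀ i < n, NBArc G g (r i) (r (i+1)) := by
  intro n
  induction n with
  | zero =>
    intro p q h
    rw [pow_zero] at h
    have hpq : p = q := by
      by_contra hne
      exact h (Matrix.one_apply_ne hne)
    exact ⟨fun _ => p, rfl, hpq, fun i hi => absurd hi (Nat.not_lt_zero i)⟩
  | succ n ih =>
    intro p q h
    rw [pow_succ, Matrix.mul_apply] at h
    obtain ⟨m, hm⟩ := Finset.exists_ne_zero_of_sum_ne_zero h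
    have h1 : (NBM G g ^ n) p m ≠ 0 := fun hz => hm.2 (by rw [hz, zero_mul])
    have h2 : NBM G g m q ≠ 0 := fun hz => hm.2 (by rw [hz, mul_zero])
    obtain ⟨r, hr0, hrn, hrarc⟩ := ih p m h1
    refine ⟨fun i => if i ≤ n then r i else q, by simpa using hr0, by simp, ?_⟩
    intro i hi
    rcases Nat.lt_or_ge i n with hin | hin
    · have hle1 : i ≤ n := by omega
      have hle2 : i + 1 ≤ n := by omega
      simpa [hle1, hle2] using hrarc i hin
    · have hieq : i = n := by omega
      show NBArc G g (if i ≤ n then r i else q) (if i + 1 ≤ n then r (i+1) else q)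
      rw [if_pos (by omega), if_neg (by omega), hieq, hrn]
      exact nbArc_of_ne G g h2

lemma nbm_pow_eq_zero (G : SimpleGraph V) [DecidableRel G.Adj] (l : ℕ) (hl : 3 ≤ l)
    (hcyc : ∀ (k : ℕ) (c : Fin k → V), IsSimpleCycle G k c → k ≤ l)
    (g : ℕ) (hg : l - 1 ≤ g) :
    NBM G g ^ (Fintype.card (DiPath G g) + 1) = 0 := by
  classical
  set n := Fintype.card (DiPath G g) + 1 with hn
  ext p q
  rw [Matrix.zero_apply]
  by_contra h
  obtain ⟨r, -, -, hchain⟩ := exists_chain G g n p q h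
  obtain ⟨i, j, hne, heq⟩ := Fintype.exists_ne_map_eq_of_card_lt
    (fun i : Fin (n+1) => r i.val) (by simp only [Fintype.card_fin]; omega)
  have hex : ∃ s t : ℕ, s < t ∧ t ≤ n ∧ r s = r t := by
    rcases Nat.lt_trichotomy i.val j.val with h' | h' | h'
    · exact ⟨i.val, j.val, h', by omega, heq⟩
    · exact absurd (Fin.ext h') hne
    · exact ⟨j.val, i.val, h', by omega, heq.symm⟩
  obtain ⟨s, t, hst, htn, hreq⟩ := hex
  set d := t - s with hdd
  have hd : 0 < d := by omega
  refine no_periodic_chain G l hl hcyc g hg (fun j => r (s + j % d)) ?_ d hd ?_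
  · intro j
    have hm : j % d < d := Nat.mod_lt _ hd
    have hdm := Nat.div_add_mod j d
    rcases Nat.lt_or_ge (j % d + 1) d with hlt | hge
    · have h1d : 1 % d = 1 := Nat.mod_eq_of_lt (by omega)
      have hmod : (j + 1) % d = j % d + 1 := by
        rw [Nat.add_mod, h1d, Nat.mod_eq_of_lt hlt]
      show NBArc G g (r (s + j % d)) (r (s + (j + 1) % d))
      rw [hmod]
      exact hchain (s + j % d) (by omega)
    · have hmeq : j % d + 1 = d := by omega
      have hmod : (j + 1) % d = 0 := by
        have : j + 1 = d * (j / d + 1) := by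
          rw [Nat.mul_add, Nat.mul_one]
          omega
        rw [this, Nat.mul_mod_right]
      show NBArc G g (r (s + j % d)) (r (s + (j + 1) % d))
      rw [hmod]
      have harc := hchain (s + j % d) (by omega)
      rw [show s + j % d + 1 = t from by omega] at harc
      rwa [Nat.add_zero, hreq]
  · show r (s + d % d) = r (s + 0 % d)
    rw [Nat.mod_self, Nat.zero_mod]

end Aux

/-- **Theorem 1(ii).** If every simple cycle of `G` has length at most `ℓ` (where `ℓ ≥ 3`),
then for every `g ≥ ℓ - 1` every complex eigenvalue of `B^(g)` is `0`; equivalently,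
`B^(g)` is nilpotent and `ρ(B^(g)) = 0`. -/
theorem nbm_spectrum_eq_zero (G : SimpleGraph V) [DecidableRel G.Adj] (l : ℕ) (hl : 3 ≤ l)
    (hcyc : ∀ (k : ℕ) (c : Fin k → V), IsSimpleCycle G k c → k ≤ l)
    (g : ℕ) (hg : l - 1 ≤ g) :
    (∀ z ∈ spectrum ℂ (NBM G g), z = 0) ∧
      IsNilpotent (NBM G g) ∧ specRad (NBM G g) = 0 := by
  have hnil : IsNilpotent (NBM G g) :=
    ⟨Fintype.card (DiPath G g) + 1, nbm_pow_eq_zero G l hl hcyc g hg⟩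
  have hspec : ∀ z ∈ spectrum ℂ (NBM G g), z = 0 := by
    intro z hz
    by_contra hz0
    rw [spectrum.mem_iff] at hz
    apply hz
    have hu : IsUnit (algebraMap ℂ (Matrix (DiPath G g) (DiPath G g) ℂ) z) :=
      (isUnit_iff_ne_zero.2 hz0).map _
    have hcomm : Commute (-(NBM G g)) (algebraMap ℂ (Matrix (DiPath G g) (DiPath G g) ℂ) z) :=
      ((Algebra.commutes z (-(NBM G g))).symm : _)
    have hunit := (hnil.neg).isUnit_add_left_of_commute hu hcomm
    rwa [← sub_eq_add_neg] at hunit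
  refine ⟨hspec, hnil, ?_⟩
  apply le_antisymm _ zero_le
  rw [specRad, spectralRadius]
  exact iSup₂_le fun z hz => by simp [hspec z hz]

end PercNB
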